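/- Let a > 0 and c < 0 be coprime integers with a < −c and with −ac not a perfect square, let n be an integer with |n| ≥ 2, and set Q = n·!![2a, 0; 0, 2c]. Then no automorph of Q of determinant −1 induces ±id on the discriminant group: there is no matrix M ∈ GL₂(ℤ) with det M = −1, Mᵀ Q M = Q, and ε ∈ {1, −1} such that (M − εI)·Q⁻¹ has integer entries. -/

import Mathlib

open Matrix

/-- for the diagonal form with `|n| ≥ 2`, no automorph of
determinant `-1` induces `±id` on the discriminant group. -/
theorem diagonal_no_improper_automorph_on_discriminant
    (a c n : ℤ) (hac : Int.gcd a c = 1) (ha : 0 < a) (hc : c < 0)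
    (haltc : a < -c) (hsq : ¬ ∃ m : ℤ, m * m = -(a * c))
    (hn : 2 ≤ |n|)
    (Q : Matrix (Fin 2) (Fin 2) ℤ) (hQ : Q = n • !![2 * a, 0; 0, 2 * c]) :
    ¬ ∃ (M : Matrix (Fin 2) (Fin 2) ℤ) (ε : ℤ),
      M.det = -1 ∧ Mᵀ * Q * M = Q ∧ (ε = 1 ∨ ε = -1) ∧
      ∀ i j : Fin 2, ∃ m : ℤ,
        ((M.map (Int.cast : ℤ → ℚ) - (ε : ℚ) • 1) *
          (Q.map (Int.cast : ℤ → ℚ))⁻¹) i j = (m : ℚ) := by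
  rintro ⟨M, ε, hdet, -, hε, hint⟩
  have hn0 : n ≠ 0 := by rintro rfl; simp at hn
  have ha' : (a : ℚ) ≠ 0 := by exact_mod_cast ha.ne'
  have hc' : (c : ℚ) ≠ 0 := by exact_mod_cast hc.ne
  have hn' : (n : ℚ) ≠ 0 := by exact_mod_cast hn0
  have hα : (2 * (a:ℚ) * n) ≠ 0 := mul_ne_zero (mul_ne_zero two_ne_zero ha') hn'
  have hγ : (2 * (c:ℚ) * n) ≠ 0 := mul_ne_zero (mul_ne_zero two_ne_zero hc') hn'
  have hQmap : Q.map (Int.cast : ℤ → ℚ) = !![2 * (a:ℚ) * n, 0; 0, 2 * (c:ℚ) * n] := by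
    subst hQ
    ext i j
    fin_cases i <;> fin_cases j <;>
      simp [Matrix.map_apply, Matrix.smul_apply] <;> push_cast <;> ring
  have hinv : (Q.map (Int.cast : ℤ → ℚ))⁻¹ =
      !![(2 * (a:ℚ) * n)⁻¹, 0; 0, (2 * (c:ℚ) * n)⁻¹] := by
    rw [hQmap]
    apply Matrix.inv_eq_right_inv
    ext i j
    fin_cases i <;> fin_cases j <;>
      simp [Matrix.mul_apply, Fin.sum_univ_two, Matrix.one_apply] <;> field_simp <;> ring
  obtain ⟨m0, h0⟩ := hint 0 0
  obtain ⟨m1, h1⟩ := hint 0 1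
  obtain ⟨m2, h2⟩ := hint 1 0
  obtain ⟨m3, h3⟩ := hint 1 1
  rw [hinv] at h0 h1 h2 h3
  simp [Matrix.mul_apply, Fin.sum_univ_two, Matrix.map_apply, Matrix.sub_apply,
    Matrix.smul_apply, Matrix.one_apply] at h0 h1 h2 h3
  field_simp at h0 h1 h2 h3
  have e0 : M 0 0 = ε + 2 * a * n * m0 := by
    have : (M 0 0 : ℚ) = ε + 2 * a * n * m0 := by linear_combination h0
    exact_mod_cast this
  have e1 : M 0 1 = 2 * c * n * m1 := by
    have : (M 0 1 : ℚ) = 2 * c * n * m1 := by linear_combination h1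
    exact_mod_cast this
  have e2 : M 1 0 = 2 * a * n * m2 := by
    have : (M 1 0 : ℚ) = 2 * a * n * m2 := by linear_combination h2
    exact_mod_cast this
  have e3 : M 1 1 = ε + 2 * c * n * m3 := by
    have : (M 1 1 : ℚ) = ε + 2 * c * n * m3 := by linear_combination h3
    exact_mod_cast this
  rw [Matrix.det_fin_two, e0, e1, e2, e3] at hdet
  have hε2 : ε * ε = 1 := by rcases hε with rfl | rfl <;> ring
  set K : ℤ := -(ε * c * m3 + a * m0 * ε + 2 * a * c * n * m0 * m3 - 2 * a * c * n * m1 * m2) with hK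
  have hk2 : 2 * (n * K) = 2 := by rw [hK]; linear_combination -hdet + hε2
  have hk : n * K = 1 := by linarith
  rcases Int.isUnit_iff.mp (IsUnit.of_mul_eq_one _ hk) with h | h <;>
    rw [h] at hn <;> simp at hn
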